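/- arXiv:2008.02216 — 6 statements merged into one kernel-verified Lean document; each statement's English description precedes it below -/
import Mathlib

section
/- For any ranking r of n items and any other ranking s, the Jaccard curve of (r, s) lies pointwise above the Jaccard curve of (r, rev(r)): for all k, J(r, s, k) ≥ J(r, rev(r), k), where rev(r) is the reversal of r. -/
open Finset Filter
open scoped Classical

noncomputable def rankOf {n : ℕ} (r : Fin n → ℝ) (i : Fin n) : ℕ :=
  (Finset.univ.filter (fun j => r i ≤ r j)).card

noncomputable def topk {n : ℕ} (r : Fin n → ℝ) (k : ℕ) : Finset (Fin n) :=
  Finset.univ.filter (fun i => rankOf r i ≤ k)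

noncomputable def jac {n : ℕ} (r s : Fin n → ℝ) (k : ℕ) : ℝ :=
  ((topk r k ∩ topk s k).card : ℝ) / ((topk r k ∪ topk s k).card : ℝ)

noncomputable def kthScore {n : ℕ} (r : Fin n → ℝ) (k : ℕ) : ℝ :=
  if h : (topk r k).Nonempty then (topk r k).inf' h r else 0

noncomputable def fmu {n : ℕ} (r : Fin n → ℝ) (k : ℕ) (i : Fin n) : ℝ :=
  if i ∈ topk r k then 1 else r i / kthScore r k

noncomputable def fuji {n : ℕ} (r s : Fin n → ℝ) (k : ℕ) : ℝ :=
  (∑ x ∈ topk r k ∪ topk s k, min (fmu r k x) (fmu s k x)) /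
  (∑ x ∈ topk r k ∪ topk s k, max (fmu r k x) (fmu s k x))

lemma rankOf_pos {n : ℕ} (r : Fin n → ℝ) (i : Fin n) : 1 ≤ rankOf r i := by
  have : i ∈ Finset.univ.filter (fun j => r i ≤ r j) := by simp
  exact Finset.card_pos.mpr ⟨i, this⟩

lemma rankOf_le {n : ℕ} (r : Fin n → ℝ) (i : Fin n) : rankOf r i ≤ n := by
  unfold rankOf
  simpa using Finset.card_filter_le Finset.univ (fun j => r i ≤ r j)

lemma rankOf_lt_of_lt {n : ℕ} (r : Fin n → ℝ) {i j : Fin n} (h : r i < r j) :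
    rankOf r j < rankOf r i := by
  apply Finset.card_lt_card
  constructor
  · intro x hx
    simp only [Finset.mem_filter, Finset.mem_univ, true_and] at hx ⊢
    linarith
  · intro hsub
    have hi : i ∈ Finset.univ.filter (fun x => r i ≤ r x) := by simp
    have := hsub hi
    simp only [Finset.mem_filter, Finset.mem_univ, true_and] at this
    linarith

lemma rankOf_inj {n : ℕ} (r : Fin n → ℝ) (hr : Function.Injective r) :
    Function.Injective (rankOf r) := by
  intro i j h
  rcases lt_trichotomy (r i) (r j) with hlt | heq | hgt
  · exact absurd h (by have := rankOf_lt_of_lt r hlt; omega)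
  · exact hr heq
  · exact absurd h (by have := rankOf_lt_of_lt r hgt; omega)

lemma rank_image {n : ℕ} (r : Fin n → ℝ) (hr : Function.Injective r) :
    Finset.univ.image (rankOf r) = Finset.Icc 1 n := by
  apply Finset.eq_of_subset_of_card_le
  · intro m hm
    simp only [Finset.mem_image, Finset.mem_univ, true_and] at hm
    obtain ⟨i, rfl⟩ := hm
    simp [Finset.mem_Icc, rankOf_pos, rankOf_le]
  · rw [Finset.card_image_of_injective _ (rankOf_inj r hr)]
    simp

lemma card_topk {n : ℕ} (r : Fin n → ℝ) (hr : Function.Injective r) (k : ℕ) (hkn : k ≤ n) :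
    (topk r k).card = k := by
  have hinj := rankOf_inj r hr
  calc (topk r k).card = ((topk r k).image (rankOf r)).card :=
        (Finset.card_image_of_injective _ hinj).symm
    _ = ((Finset.univ.image (rankOf r)).filter (· ≤ k)).card := by
        rw [topk, Finset.filter_image]
    _ = ((Finset.Icc 1 n).filter (· ≤ k)).card := by rw [rank_image r hr]
    _ = (Finset.Icc 1 k).card := by
        congr 1
        ext m
        simp only [Finset.mem_filter, Finset.mem_Icc]
        omega
    _ = k := by simp

lemma inter_card_le {n : ℕ} (r rv : Fin n → ℝ) (hr : Function.Injective r)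
    (hrev : ∀ x, rankOf rv x = n + 1 - rankOf r x) (k : ℕ) (hkn : k ≤ n) :
    (topk r k ∩ topk rv k).card ≤ 2 * k - n := by
  have h1 : (topk r k ∩ topk rv k).card ≤ (Finset.Icc (n + 1 - k) k).card := by
    apply Finset.card_le_card_of_injOn (rankOf r)
    · intro x hx
      simp only [Finset.mem_coe, topk, Finset.mem_inter, Finset.mem_filter, Finset.mem_univ, true_and] at hx
      rw [hrev] at hx
      have := rankOf_le r x
      simp only [Finset.mem_coe, Finset.mem_Icc]
      omega
    · exact fun a _ b _ h => rankOf_inj r hr h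
  rw [Nat.card_Icc] at h1
  omega

theorem jaccard_curve_above_reversal {n : ℕ} (r s rv : Fin n → ℝ)
    (hr : Function.Injective r) (hs : Function.Injective s)
    (hrv : Function.Injective rv)
    (hrev : ∀ x, rankOf rv x = n + 1 - rankOf r x)
    (k : ℕ) (hk1 : 1 ≤ k) (hkn : k ≤ n) :
    jac r rv k ≤ jac r s k := by
  unfold jac
  set A := topk r k
  set B := topk s k
  set C := topk rv k
  have hA : A.card = k := card_topk r hr k hkn
  have hB : B.card = k := card_topk s hs k hkn
  have hC : C.card = k := card_topk rv hrv k hkn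
  have hUB : (A ∪ B).card + (A ∩ B).card = 2 * k := by
    rw [Finset.card_union_add_card_inter, hA, hB]; ring
  have hUC : (A ∪ C).card + (A ∩ C).card = 2 * k := by
    rw [Finset.card_union_add_card_inter, hA, hC]; ring
  have h3 : (A ∪ B).card ≤ n := le_trans (Finset.card_le_univ _) (by simp)
  have hcm : (A ∩ C).card ≤ (A ∩ B).card := by
    have h1 : (A ∩ C).card ≤ 2 * k - n := inter_card_le r rv hr hrev k hkn
    omega
  have hBpos : 0 < (A ∪ B).card := by
    have : A.card ≤ (A ∪ B).card := Finset.card_le_card Finset.subset_union_left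
    omega
  have hCpos : 0 < (A ∪ C).card := by
    have : A.card ≤ (A ∪ C).card := Finset.card_le_card Finset.subset_union_left
    omega
  rw [div_le_div_iff₀ (by exact_mod_cast hCpos) (by exact_mod_cast hBpos)]
  have key : (A ∩ C).card * (A ∪ B).card ≤ (A ∩ B).card * (A ∪ C).card := by
    nlinarith [hcm, hUB, hUC]
  exact_mod_cast key
end

section
/- For any two rankings r, s of n items with strictly positive scores and any cutoff k, the fuzzy Jaccard index satisfies FUJI(r,s,k) ≥ J(r,s,k), i.e., the Fuzzy Jaccard Index is bounded below by the ordinary Jaccard index. -/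
open Finset Filter
open scoped Classical

lemma rank_mono {n : ℕ} (r : Fin n → ℝ) {i j : Fin n} (h : r j ≤ r i) :
    rankOf r i ≤ rankOf r j := by
  apply Finset.card_le_card
  intro x hx
  simp only [rankOf, Finset.mem_filter] at *
  exact ⟨hx.1, h.trans hx.2⟩

lemma topk_nonempty {n : ℕ} (r : Fin n → ℝ) (hr : Function.Injective r)
    (k : ℕ) (hk : 1 ≤ k) (hn : 1 ≤ n) : (topk r k).Nonempty := by
  obtain ⟨b, _, hb⟩ := Finset.exists_max_image Finset.univ r ⟨⟨0, hn⟩, Finset.mem_univ _⟩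
  refine ⟨b, ?_⟩
  simp only [topk, Finset.mem_filter, Finset.mem_univ, true_and]
  have : (Finset.univ.filter (fun j => r b ≤ r j)) = {b} := by
    ext j
    simp only [Finset.mem_filter, Finset.mem_univ, true_and, Finset.mem_singleton]
    constructor
    · intro hj
      exact hr (le_antisymm (hb j (Finset.mem_univ _)) hj)
    · rintro rfl; exact le_rfl
  simp only [rankOf, this, Finset.card_singleton]
  exact hk

lemma kth_pos {n : ℕ} (r : Fin n → ℝ) (hrpos : ∀ i, 0 < r i) (k : ℕ)
    (h : (topk r k).Nonempty) : 0 < kthScore r k := by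
  rw [kthScore, dif_pos h]
  obtain ⟨a, _, ha⟩ := Finset.exists_mem_eq_inf' h r
  rw [ha]; exact hrpos a

lemma lt_kth {n : ℕ} (r : Fin n → ℝ) (k : ℕ) (h : (topk r k).Nonempty)
    {i : Fin n} (hi : i ∉ topk r k) : r i ≤ kthScore r k := by
  rw [kthScore, dif_pos h]
  obtain ⟨a, ha, hae⟩ := Finset.exists_mem_eq_inf' h r
  rw [hae]
  by_contra hlt
  push_neg at hlt
  apply hi
  simp only [topk, Finset.mem_filter, Finset.mem_univ, true_and] at ha ⊢
  exact le_trans (rank_mono r hlt.le) ha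

lemma fmu_nonneg {n : ℕ} (r : Fin n → ℝ) (hrpos : ∀ i, 0 < r i) (k : ℕ) (i : Fin n) :
    0 ≤ fmu r k i := by
  rw [fmu]
  split
  · exact zero_le_one
  · by_cases h : (topk r k).Nonempty
    · exact div_nonneg (hrpos i).le (kth_pos r hrpos k h).le
    · rw [kthScore, dif_neg h, div_zero]

lemma fmu_le_one {n : ℕ} (r : Fin n → ℝ) (hrpos : ∀ i, 0 < r i) (k : ℕ)
    (h : (topk r k).Nonempty) (i : Fin n) : fmu r k i ≤ 1 := by
  rw [fmu]
  split
  · exact le_rfl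
  · rw [div_le_one (kth_pos r hrpos k h)]
    exact lt_kth r k h (by assumption)

theorem fuji_ge_jaccard {n : ℕ} (r s : Fin n → ℝ)
    (hr : Function.Injective r) (hs : Function.Injective s)
    (hrpos : ∀ i, 0 < r i) (hspos : ∀ i, 0 < s i)
    (k : ℕ) (hk1 : 1 ≤ k) (hkn : k ≤ n) :
    jac r s k ≤ fuji r s k := by
  have hn : 1 ≤ n := le_trans hk1 hkn
  have hA : (topk r k).Nonempty := topk_nonempty r hr k hk1 hn
  have hB : (topk s k).Nonempty := topk_nonempty s hs k hk1 hn
  set U := topk r k ∪ topk s k with hU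
  have hUne : U.Nonempty := hA.mono Finset.subset_union_left
  have hmax : ∀ x ∈ U, max (fmu r k x) (fmu s k x) = 1 := by
    intro x hx
    rcases Finset.mem_union.mp hx with hx | hx
    · have h1 : fmu r k x = 1 := if_pos hx
      rw [max_eq_left (by rw [h1]; exact fmu_le_one s hspos k hB x), h1]
    · have h1 : fmu s k x = 1 := if_pos hx
      rw [max_eq_right (by rw [h1]; exact fmu_le_one r hrpos k hA x), h1]
  have hden : ∑ x ∈ U, max (fmu r k x) (fmu s k x) = (U.card : ℝ) := by
    rw [Finset.sum_congr rfl hmax, Finset.sum_const, nsmul_eq_mul, mul_one]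
  have hnum : ((topk r k ∩ topk s k).card : ℝ) ≤
      ∑ x ∈ U, min (fmu r k x) (fmu s k x) := by
    have hsub : topk r k ∩ topk s k ⊆ U :=
      le_trans Finset.inter_subset_left Finset.subset_union_left
    have h1 : ∑ x ∈ topk r k ∩ topk s k, min (fmu r k x) (fmu s k x)
        = ((topk r k ∩ topk s k).card : ℝ) := by
      rw [Finset.sum_congr rfl (fun x hx => ?_), Finset.sum_const, nsmul_eq_mul, mul_one]
      rw [Finset.mem_inter] at hx
      rw [fmu, if_pos hx.1, fmu, if_pos hx.2, min_self]
    rw [← h1]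
    apply Finset.sum_le_sum_of_subset_of_nonneg hsub
    intro x _ _
    exact le_min (fmu_nonneg r hrpos k x) (fmu_nonneg s hspos k x)
  have hUpos : (0 : ℝ) < U.card := by
    exact_mod_cast Finset.card_pos.mpr hUne
  rw [jac, fuji, ← hU, hden]
  gcongr
end

section
/- With rankings r = (1, 1/2, 1/3), s_ε = (1 − 2ε, 1 − ε, 1), and t_α = (α, 1, α²) on three items: lim_{ε→0⁺} FUJI(r, s_ε, 1) = 2/3, lim_{ε→0⁺} FUJI(r, s_ε, 2) = 8/9, lim_{α→∞} FUJI(r, t_α, 1) = 1/6, and lim_{α→∞} FUJI(r, t_α, 2) = 5/9; hence for small enough ε > 0 and large enough α, FUJI(r, s_ε, k) > FUJI(r, t_α, k) for k = 1, 2, even though s_ε exactly reverses r while t_α does not. -/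
open Finset Filter
open scoped Classical

lemma rankOf_eval (r : Fin 3 → ℝ) (i : Fin 3) :
    rankOf r i = ((if r i ≤ r 0 then 1 else 0) + if r i ≤ r 1 then 1 else 0) + (if r i ≤ r 2 then 1 else 0) := by
  unfold rankOf
  rw [Finset.card_filter, Fin.sum_univ_three]

lemma mem_topk (r : Fin 3 → ℝ) (k : ℕ) (i : Fin 3) : i ∈ topk r k ↔ rankOf r i ≤ k := by
  simp [topk]

lemma fmu_mem {r : Fin 3 → ℝ} {k : ℕ} {i : Fin 3} (h : i ∈ topk r k) : fmu r k i = 1 := by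
  simp [fmu, h]

lemma fmu_not_mem {r : Fin 3 → ℝ} {k : ℕ} {i : Fin 3} (h : i ∉ topk r k) :
    fmu r k i = r i / kthScore r k := by
  simp [fmu, h]

lemma kth_singleton {r : Fin 3 → ℝ} {k : ℕ} {a : Fin 3} (h : topk r k = {a}) :
    kthScore r k = r a := by
  rw [kthScore, dif_pos (h ▸ Finset.singleton_nonempty a)]
  simp only [h, Finset.inf'_singleton]

lemma kth_pair {r : Fin 3 → ℝ} {k : ℕ} {a b : Fin 3} (h : topk r k = {a, b}) :
    kthScore r k = min (r a) (r b) := by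
  have hne : (topk r k).Nonempty := h ▸ Finset.insert_nonempty a {b}
  rw [kthScore, dif_pos hne]
  apply le_antisymm
  · exact le_min (Finset.inf'_le _ (by rw [h]; exact Finset.mem_insert_self a {b}))
      (Finset.inf'_le _ (by rw [h]; exact Finset.mem_insert_of_mem (Finset.mem_singleton_self b)))
  · apply Finset.le_inf'
    intro x hx
    rw [h, Finset.mem_insert, Finset.mem_singleton] at hx
    rcases hx with rfl | rfl
    · exact min_le_left _ _
    · exact min_le_right _ _

-- topk lemmas for r
lemma topk_r1 : topk ![1, 1/2, (1:ℝ)/3] 1 = {0} := by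
  ext i; fin_cases i <;>
    simp only [mem_topk, rankOf_eval, Fin.zero_eta, Fin.mk_one, Fin.reduceFinMk, Matrix.cons_val_zero, Matrix.cons_val_one,
      Matrix.head_cons, Matrix.cons_val_two, Matrix.tail_cons, Finset.mem_singleton] <;>
    norm_num <;> decide

lemma topk_r2 : topk ![1, 1/2, (1:ℝ)/3] 2 = {0, 1} := by
  ext i; fin_cases i <;>
    simp only [mem_topk, rankOf_eval, Fin.zero_eta, Fin.mk_one, Fin.reduceFinMk, Matrix.cons_val_zero, Matrix.cons_val_one,
      Matrix.head_cons, Matrix.cons_val_two, Matrix.tail_cons, Finset.mem_insert, Finset.mem_singleton] <;>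
    norm_num <;> decide

lemma kth_r1 : kthScore ![1, 1/2, (1:ℝ)/3] 1 = 1 := kth_singleton topk_r1
lemma kth_r2 : kthScore ![1, 1/2, (1:ℝ)/3] 2 = 1/2 := by
  rw [kth_pair topk_r2]
  norm_num

section S
variable (ε : ℝ) (h1 : 0 < ε) (h2 : ε < 1/2)

include h1 in
lemma topk_s1 : topk ![1 - 2*ε, 1 - ε, (1:ℝ)] 1 = {2} := by
  have hs1 : ¬ (1 - ε ≤ 1 - 2*ε) := by linarith
  have hs2 : 1 - 2*ε ≤ 1 - ε := by linarith
  have hs3 : ¬ ((1:ℝ) ≤ 1 - ε) := by linarith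
  have hs4 : ¬ ((1:ℝ) ≤ 1 - 2*ε) := by linarith
  have hs5 : 1 - ε ≤ (1:ℝ) := by linarith
  have hs6 : 1 - 2*ε ≤ (1:ℝ) := by linarith
  ext i; fin_cases i <;>
    simp only [mem_topk, rankOf_eval, Fin.zero_eta, Fin.mk_one, Fin.reduceFinMk, Matrix.cons_val_zero, Matrix.cons_val_one,
      Matrix.head_cons, Matrix.cons_val_two, Matrix.tail_cons, Finset.mem_singleton] <;>
    simp [hs1, hs2, hs3, hs4, hs5, hs6]

include h1 in
lemma topk_s2 : topk ![1 - 2*ε, 1 - ε, (1:ℝ)] 2 = {1, 2} := by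
  have hs1 : ¬ (1 - ε ≤ 1 - 2*ε) := by linarith
  have hs2 : 1 - 2*ε ≤ 1 - ε := by linarith
  have hs3 : ¬ ((1:ℝ) ≤ 1 - ε) := by linarith
  have hs4 : ¬ ((1:ℝ) ≤ 1 - 2*ε) := by linarith
  have hs5 : 1 - ε ≤ (1:ℝ) := by linarith
  have hs6 : 1 - 2*ε ≤ (1:ℝ) := by linarith
  ext i; fin_cases i <;>
    simp only [mem_topk, rankOf_eval, Fin.zero_eta, Fin.mk_one, Fin.reduceFinMk, Matrix.cons_val_zero, Matrix.cons_val_one,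
      Matrix.head_cons, Matrix.cons_val_two, Matrix.tail_cons, Finset.mem_insert, Finset.mem_singleton] <;>
    simp [hs1, hs2, hs3, hs4, hs5, hs6]

include h1 in
lemma kth_s2 : kthScore ![1 - 2*ε, 1 - ε, (1:ℝ)] 2 = 1 - ε := by
  rw [kth_pair (topk_s2 ε h1)]
  simp only [Matrix.cons_val_zero, Matrix.cons_val_one, Matrix.head_cons, Matrix.cons_val_two, Matrix.tail_cons]
  rw [min_eq_left (by linarith)]

include h1 h2 in
lemma fuji_s1 : fuji ![1, 1/2, (1:ℝ)/3] ![1 - 2*ε, 1 - ε, (1:ℝ)] 1 = (4/3 - 2*ε)/2 := by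
  unfold fuji
  rw [topk_r1, topk_s1 ε h1]
  have hU : ({0} ∪ {2} : Finset (Fin 3)) = {0, 2} := by decide
  rw [hU, Finset.sum_pair (by decide), Finset.sum_pair (by decide)]
  rw [fmu_mem (r := ![1, 1/2, (1:ℝ)/3]) (k := 1) (i := 0) (by rw [topk_r1]; decide),
    fmu_not_mem (r := ![1, 1/2, (1:ℝ)/3]) (k := 1) (i := 2) (by rw [topk_r1]; decide),
    fmu_mem (r := ![1 - 2*ε, 1 - ε, (1:ℝ)]) (k := 1) (i := 2) (by rw [topk_s1 ε h1]; decide),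
    fmu_not_mem (r := ![1 - 2*ε, 1 - ε, (1:ℝ)]) (k := 1) (i := 0) (by rw [topk_s1 ε h1]; decide),
    kth_r1, kth_singleton (topk_s1 ε h1)]
  simp only [Matrix.cons_val_zero, Matrix.cons_val_one, Matrix.head_cons,
    Matrix.cons_val_two, Matrix.tail_cons, div_one]
  rw [min_eq_right (by linarith), min_eq_left (by norm_num),
    max_eq_left (by linarith), max_eq_right (by norm_num)]
  ring

include h1 h2 in
lemma fuji_s2 : fuji ![1, 1/2, (1:ℝ)/3] ![1 - 2*ε, 1 - ε, (1:ℝ)] 2 = ((1-2*ε)/(1-ε) + 5/3)/3 := by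
  unfold fuji
  rw [topk_r2, topk_s2 ε h1]
  have hU : ({0, 1} ∪ {1, 2} : Finset (Fin 3)) = {0, 1, 2} := by decide
  rw [hU, show ({0,1,2} : Finset (Fin 3)) = Finset.univ by decide, Fin.sum_univ_three, Fin.sum_univ_three]
  rw [fmu_mem (r := ![1, 1/2, (1:ℝ)/3]) (k := 2) (i := 0) (by rw [topk_r2]; decide),
    fmu_mem (r := ![1, 1/2, (1:ℝ)/3]) (k := 2) (i := 1) (by rw [topk_r2]; decide),
    fmu_not_mem (r := ![1, 1/2, (1:ℝ)/3]) (k := 2) (i := 2) (by rw [topk_r2]; decide),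
    fmu_mem (r := ![1 - 2*ε, 1 - ε, (1:ℝ)]) (k := 2) (i := 1) (by rw [topk_s2 ε h1]; decide),
    fmu_mem (r := ![1 - 2*ε, 1 - ε, (1:ℝ)]) (k := 2) (i := 2) (by rw [topk_s2 ε h1]; decide),
    fmu_not_mem (r := ![1 - 2*ε, 1 - ε, (1:ℝ)]) (k := 2) (i := 0) (by rw [topk_s2 ε h1]; decide),
    kth_r2, kth_s2 ε h1]
  simp only [Matrix.cons_val_zero, Matrix.cons_val_one, Matrix.head_cons,
    Matrix.cons_val_two, Matrix.tail_cons]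
  have hε : (1-2*ε)/(1-ε) ≤ 1 := by
    rw [div_le_one (by linarith)]; linarith
  have h3 : ((1:ℝ)/3)/(1/2) ≤ 1 := by norm_num
  rw [min_eq_right hε, max_eq_left hε, min_eq_left h3, max_eq_right h3, min_self, max_self]
  norm_num
  ring

end S

section T
variable (α : ℝ) (hα : 1 < α)

include hα in
lemma topk_t1 : topk ![α, 1, α^2] 1 = {2} := by
  have h2 : α < α^2 := by nlinarith
  have h3 : ¬ α ≤ 1 := by linarith
  have h4 : ¬ α^2 ≤ α := by linarith
  have h5 : α ≤ α^2 := h2.le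
  have h6 : ¬ α^2 ≤ 1 := by nlinarith
  have h7 : (1:ℝ) ≤ α^2 := by nlinarith
  ext i; fin_cases i <;>
    simp only [mem_topk, rankOf_eval, Fin.zero_eta, Fin.mk_one, Fin.reduceFinMk, Matrix.cons_val_zero, Matrix.cons_val_one,
      Matrix.head_cons, Matrix.cons_val_two, Matrix.tail_cons, Finset.mem_singleton] <;>
    simp [h3, h4, h5, h6, h7, hα.le]

include hα in
lemma topk_t2 : topk ![α, 1, α^2] 2 = {0, 2} := by
  have h2 : α < α^2 := by nlinarith
  have h3 : ¬ α ≤ 1 := by linarith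
  have h4 : ¬ α^2 ≤ α := by linarith
  have h5 : α ≤ α^2 := h2.le
  have h6 : ¬ α^2 ≤ 1 := by nlinarith
  have h7 : (1:ℝ) ≤ α^2 := by nlinarith
  ext i; fin_cases i <;>
    simp only [mem_topk, rankOf_eval, Fin.zero_eta, Fin.mk_one, Fin.reduceFinMk, Matrix.cons_val_zero, Matrix.cons_val_one,
      Matrix.head_cons, Matrix.cons_val_two, Matrix.tail_cons, Finset.mem_insert, Finset.mem_singleton] <;>
    simp [h3, h4, h5, h6, h7, hα.le]

include hα in
lemma fuji_t1 : fuji ![1, 1/2, (1:ℝ)/3] ![α, 1, α^2] 1 = (1/α + 1/3)/2 := by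
  have hk : kthScore ![α, 1, α^2] 1 = α^2 := kth_singleton (topk_t1 α hα)
  unfold fuji
  rw [topk_r1, topk_t1 α hα]
  have hU : ({0} ∪ {2} : Finset (Fin 3)) = {0, 2} := by decide
  rw [hU, Finset.sum_pair (by decide), Finset.sum_pair (by decide)]
  rw [fmu_mem (r := ![1, 1/2, (1:ℝ)/3]) (k := 1) (i := 0) (by rw [topk_r1]; decide),
    fmu_not_mem (r := ![1, 1/2, (1:ℝ)/3]) (k := 1) (i := 2) (by rw [topk_r1]; decide),
    fmu_mem (r := ![α, 1, α^2]) (k := 1) (i := 2) (by rw [topk_t1 α hα]; decide),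
    fmu_not_mem (r := ![α, 1, α^2]) (k := 1) (i := 0) (by rw [topk_t1 α hα]; decide),
    kth_r1, hk]
  simp only [Matrix.cons_val_zero, Matrix.cons_val_one, Matrix.head_cons,
    Matrix.cons_val_two, Matrix.tail_cons, div_one]
  have hα0 : (0:ℝ) < α := by linarith
  have hdiv : α / α^2 = 1/α := by field_simp
  have hle : α / α^2 ≤ 1 := by rw [hdiv, div_le_one hα0]; linarith
  rw [min_eq_right hle, max_eq_left hle, min_eq_left (by norm_num),
    max_eq_right (by norm_num), hdiv]
  ring

include hα in
lemma fuji_t2 : fuji ![1, 1/2, (1:ℝ)/3] ![α, 1, α^2] 2 = (1/α + 5/3)/3 := by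
  have hα0 : (0:ℝ) < α := by linarith
  have hk : kthScore ![α, 1, α^2] 2 = α := by
    rw [kth_pair (topk_t2 α hα)]
    simp only [Matrix.cons_val_zero, Matrix.cons_val_two, Matrix.tail_cons, Matrix.head_cons]
    rw [min_eq_left (by nlinarith)]
  unfold fuji
  rw [topk_r2, topk_t2 α hα]
  have hU : ({0, 1} ∪ {0, 2} : Finset (Fin 3)) = {0, 1, 2} := by decide
  rw [hU, show ({0,1,2} : Finset (Fin 3)) = Finset.univ by decide, Fin.sum_univ_three, Fin.sum_univ_three]
  rw [fmu_mem (r := ![1, 1/2, (1:ℝ)/3]) (k := 2) (i := 0) (by rw [topk_r2]; decide),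
    fmu_mem (r := ![1, 1/2, (1:ℝ)/3]) (k := 2) (i := 1) (by rw [topk_r2]; decide),
    fmu_not_mem (r := ![1, 1/2, (1:ℝ)/3]) (k := 2) (i := 2) (by rw [topk_r2]; decide),
    fmu_mem (r := ![α, 1, α^2]) (k := 2) (i := 0) (by rw [topk_t2 α hα]; decide),
    fmu_mem (r := ![α, 1, α^2]) (k := 2) (i := 2) (by rw [topk_t2 α hα]; decide),
    fmu_not_mem (r := ![α, 1, α^2]) (k := 2) (i := 1) (by rw [topk_t2 α hα]; decide),
    kth_r2, hk]
  simp only [Matrix.cons_val_zero, Matrix.cons_val_one, Matrix.head_cons,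
    Matrix.cons_val_two, Matrix.tail_cons]
  have hle : (1:ℝ)/α ≤ 1 := by rw [div_le_one hα0]; linarith
  have h3 : ((1:ℝ)/3)/(1/2) ≤ 1 := by norm_num
  rw [min_self, max_self, min_eq_right hle, max_eq_left hle, min_eq_left h3, max_eq_right h3]
  norm_num
  ring

end T

theorem fuji_three_item_limits :
    Filter.Tendsto (fun ε : ℝ => fuji ![1, 1/2, 1/3] ![1 - 2*ε, 1 - ε, 1] 1)
      (nhdsWithin 0 (Set.Ioi 0)) (nhds (2/3)) ∧
    Filter.Tendsto (fun ε : ℝ => fuji ![1, 1/2, 1/3] ![1 - 2*ε, 1 - ε, 1] 2)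
      (nhdsWithin 0 (Set.Ioi 0)) (nhds (8/9)) ∧
    Filter.Tendsto (fun α : ℝ => fuji ![1, 1/2, 1/3] ![α, 1, α^2] 1)
      Filter.atTop (nhds (1/6)) ∧
    Filter.Tendsto (fun α : ℝ => fuji ![1, 1/2, 1/3] ![α, 1, α^2] 2)
      Filter.atTop (nhds (5/9)) ∧
    ∃ ε : ℝ, 0 < ε ∧ ε < 1/2 ∧ ∃ α : ℝ, 1 < α ∧
      ∀ k ∈ ({1, 2} : Set ℕ),
        fuji ![1, 1/2, 1/3] ![α, 1, α^2] k
          < fuji ![1, 1/2, 1/3] ![1 - 2*ε, 1 - ε, 1] k := by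
  have hev : ∀ᶠ ε : ℝ in nhdsWithin 0 (Set.Ioi 0), 0 < ε ∧ ε < 1/2 := by
    filter_upwards [Ioo_mem_nhdsGT_of_mem (by norm_num : (0:ℝ) ∈ Set.Ico 0 (1/2))] with x hx
    exact ⟨hx.1, hx.2⟩
  have hevα : ∀ᶠ α : ℝ in Filter.atTop, (1:ℝ) < α := eventually_gt_atTop 1
  refine ⟨?_, ?_, ?_, ?_, ?_⟩
  · apply Filter.Tendsto.congr' (hev.mono fun ε hε => (fuji_s1 ε hε.1 hε.2).symm)
    have h : ContinuousAt (fun ε : ℝ => (4/3 - 2*ε)/2) 0 := by fun_prop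
    have h2 := h.tendsto.mono_left (nhdsWithin_le_nhds (s := Set.Ioi 0))
    convert h2 using 2
    norm_num
  · apply Filter.Tendsto.congr' (hev.mono fun ε hε => (fuji_s2 ε hε.1 hε.2).symm)
    have : Filter.Tendsto (fun ε : ℝ => ((1-2*ε)/(1-ε) + 5/3)/3) (nhds 0) (nhds (8/9)) := by
      have h : ContinuousAt (fun ε : ℝ => ((1-2*ε)/(1-ε) + 5/3)/3) 0 := by
        apply ContinuousAt.div_const
        apply ContinuousAt.add _ continuousAt_const
        exact ContinuousAt.div (by fun_prop) (by fun_prop) (by norm_num)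
      have h2 := h.tendsto
      convert h2 using 2
      norm_num
    exact this.mono_left nhdsWithin_le_nhds
  · apply Filter.Tendsto.congr' (hevα.mono fun α hα => (fuji_t1 α hα).symm)
    have : Filter.Tendsto (fun α : ℝ => (1/α + 1/3)/2) Filter.atTop (nhds ((0 + 1/3)/2)) := by
      exact ((tendsto_inv_atTop_zero.congr fun x => (one_div x).symm).add tendsto_const_nhds).div_const 2
    convert this using 2
    norm_num
  · apply Filter.Tendsto.congr' (hevα.mono fun α hα => (fuji_t2 α hα).symm)
    have : Filter.Tendsto (fun α : ℝ => (1/α + 5/3)/3) Filter.atTop (nhds ((0 + 5/3)/3)) := by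
      exact ((tendsto_inv_atTop_zero.congr fun x => (one_div x).symm).add tendsto_const_nhds).div_const 3
    convert this using 2
    norm_num
  · refine ⟨1/4, by norm_num, by norm_num, 3, by norm_num, ?_⟩
    intro k hk
    rcases hk with rfl | rfl
    · rw [fuji_t1 3 (by norm_num), fuji_s1 (1/4) (by norm_num) (by norm_num)]
      norm_num
    · rw [fuji_t2 3 (by norm_num), fuji_s2 (1/4) (by norm_num) (by norm_num)]
      norm_num
end

section
/- For every ε > 0 and every pair of permutations π, τ of {1,…,n}, there exist score vectors r and s inducing the item orderings π and τ respectively, such that |FUJI(r, s, k) − J(r, s, k)| ≤ ε for all cutoffs 1 ≤ k ≤ n. In particular, one may take geometrically decaying scores r_{π(i)} = α^{i−1} and s_{τ(i)} = α^{i−1} for α > 0 sufficiently small. -/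
open Finset Filter
open scoped Classical

section auxgeo

variable {n : ℕ} {α : ℝ}

lemma mem_topk_geo (hα0 : 0 < α) (hα1 : α < 1) (π : Equiv.Perm (Fin n)) (k : ℕ) (i : Fin n) :
    i ∈ topk (fun j => α ^ ((π.symm j : ℕ))) k ↔ (π.symm i : ℕ) < k := by
  have hrank : rankOf (fun j => α ^ ((π.symm j : ℕ))) i = (π.symm i : ℕ) + 1 := by
    unfold rankOf
    have hset : Finset.univ.filter (fun j : Fin n => α ^ ((π.symm i : ℕ)) ≤ α ^ ((π.symm j : ℕ)))
        = (Finset.Iic (π.symm i)).map π.toEmbedding := by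
      ext j
      simp only [Finset.mem_filter, Finset.mem_univ, true_and, Finset.mem_map,
        Finset.mem_Iic, Equiv.coe_toEmbedding]
      rw [StrictAnti.le_iff_ge (pow_right_strictAnti₀ hα0 hα1)]
      constructor
      · intro h
        exact ⟨π.symm j, by exact_mod_cast h, π.apply_symm_apply j⟩
      · rintro ⟨a, ha, rfl⟩
        simpa using ha
    rw [hset, Finset.card_map, Fin.card_Iic]
  simp only [topk, Finset.mem_filter, Finset.mem_univ, true_and, hrank]
  omega

lemma kthScore_geo (hα0 : 0 < α) (hα1 : α < 1) (π : Equiv.Perm (Fin n)) {k : ℕ}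
    (hk1 : 1 ≤ k) (hkn : k ≤ n) :
    kthScore (fun j => α ^ ((π.symm j : ℕ))) k = α ^ (k - 1) := by
  have hmem : π ⟨k - 1, by omega⟩ ∈ topk (fun j => α ^ ((π.symm j : ℕ))) k := by
    rw [mem_topk_geo hα0 hα1]
    simp only [Equiv.symm_apply_apply]
    omega
  have hne : (topk (fun j : Fin n => α ^ ((π.symm j : ℕ))) k).Nonempty := ⟨_, hmem⟩
  rw [kthScore, dif_pos hne]
  apply le_antisymm
  · have h := Finset.inf'_le (fun j : Fin n => α ^ ((π.symm j : ℕ))) hmem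
    simp only [Equiv.symm_apply_apply, Fin.val_mk] at h
    exact h
  · apply Finset.le_inf'
    intro b hb
    have hb' := (mem_topk_geo hα0 hα1 π k b).1 hb
    exact pow_le_pow_of_le_one hα0.le hα1.le (by omega)

lemma fmu_le_alpha (hα0 : 0 < α) (hα1 : α < 1) (π : Equiv.Perm (Fin n)) {k : ℕ}
    (hk1 : 1 ≤ k) (hkn : k ≤ n) {i : Fin n}
    (hi : i ∉ topk (fun j => α ^ ((π.symm j : ℕ))) k) :
    fmu (fun j => α ^ ((π.symm j : ℕ))) k i ≤ α := by
  have hi' : ¬ ((π.symm i : ℕ) < k) := fun h => hi ((mem_topk_geo hα0 hα1 π k i).2 h)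
  rw [fmu, if_neg hi, kthScore_geo hα0 hα1 π hk1 hkn]
  rw [div_le_iff₀ (pow_pos hα0 _)]
  have hk : α * α ^ (k - 1) = α ^ k := by
    rw [← pow_succ']
    congr 1
    omega
  rw [hk]
  exact pow_le_pow_of_le_one hα0.le hα1.le (by omega)

lemma fmu_pos_geo (hα0 : 0 < α) (hα1 : α < 1) (π : Equiv.Perm (Fin n)) {k : ℕ}
    (hk1 : 1 ≤ k) (hkn : k ≤ n) (i : Fin n) :
    0 < fmu (fun j => α ^ ((π.symm j : ℕ))) k i := by
  rw [fmu]
  split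
  · norm_num
  · rw [kthScore_geo hα0 hα1 π hk1 hkn]
    exact div_pos (pow_pos hα0 _) (pow_pos hα0 _)

lemma fmu_of_mem {r : Fin n → ℝ} {k : ℕ} {i : Fin n} (h : i ∈ topk r k) : fmu r k i = 1 :=
  if_pos h

end auxgeo

theorem fuji_close_to_jaccard {n : ℕ} (ε : ℝ) (hε : 0 < ε)
    (π τ : Equiv.Perm (Fin n)) :
    ∃ r s : Fin n → ℝ,
      (∀ i, 0 < r i) ∧ (∀ i, 0 < s i) ∧
      (∀ i j : Fin n, i < j → r (π j) < r (π i)) ∧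
      (∀ i j : Fin n, i < j → s (τ j) < s (τ i)) ∧
      ∀ k, 1 ≤ k → k ≤ n → |fuji r s k - jac r s k| ≤ ε := by
  set α := min ε (1/2) with hαdef
  have hα0 : 0 < α := lt_min hε (by norm_num)
  have hα1 : α < 1 := lt_of_le_of_lt (min_le_right _ _) (by norm_num)
  have hαε : α ≤ ε := min_le_left _ _
  refine ⟨fun i => α ^ ((π.symm i : ℕ)), fun i => α ^ ((τ.symm i : ℕ)),
    fun i => pow_pos hα0 _, fun i => pow_pos hα0 _, ?_, ?_, ?_⟩
  · intro i j hij
    simp only [Equiv.symm_apply_apply]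
    exact pow_lt_pow_right_of_lt_one₀ hα0 hα1 hij
  · intro i j hij
    simp only [Equiv.symm_apply_apply]
    exact pow_lt_pow_right_of_lt_one₀ hα0 hα1 hij
  · intro k hk1 hkn
    set r : Fin n → ℝ := fun i => α ^ ((π.symm i : ℕ)) with hr
    set s : Fin n → ℝ := fun i => α ^ ((τ.symm i : ℕ)) with hs
    have hn : 0 < n := lt_of_lt_of_le hk1 hkn
    set U := topk r k ∪ topk s k with hU
    set I := topk r k ∩ topk s k with hI
    have hT1ne : (topk r k).Nonempty := by
      refine ⟨π ⟨0, hn⟩, ?_⟩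
      rw [hr, mem_topk_geo hα0 hα1]
      simp only [Equiv.symm_apply_apply]
      omega
    have hUne : U.Nonempty := hT1ne.mono Finset.subset_union_left
    have hUcard : (0 : ℝ) < (U.card : ℝ) := by
      exact_mod_cast Finset.card_pos.2 hUne
    have hfmur_pos : ∀ i, 0 < fmu r k i := fmu_pos_geo hα0 hα1 π hk1 hkn
    have hfmus_pos : ∀ i, 0 < fmu s k i := fmu_pos_geo hα0 hα1 τ hk1 hkn
    have hfmur_le : ∀ i, fmu r k i ≤ 1 := by
      intro i
      by_cases h : i ∈ topk r k
      · rw [fmu_of_mem h]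
      · exact (fmu_le_alpha hα0 hα1 π hk1 hkn h).trans hα1.le
    have hfmus_le : ∀ i, fmu s k i ≤ 1 := by
      intro i
      by_cases h : i ∈ topk s k
      · rw [fmu_of_mem h]
      · exact (fmu_le_alpha hα0 hα1 τ hk1 hkn h).trans hα1.le
    have hmax : ∀ x ∈ U, max (fmu r k x) (fmu s k x) = 1 := by
      intro x hx
      rcases Finset.mem_union.1 hx with h | h
      · rw [fmu_of_mem h, max_eq_left (hfmus_le x)]
      · rw [fmu_of_mem h, max_eq_right (hfmur_le x)]
    have hsummax : ∑ x ∈ U, max (fmu r k x) (fmu s k x) = (U.card : ℝ) := by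
      rw [Finset.sum_congr rfl hmax, Finset.sum_const, nsmul_eq_mul, mul_one]
    have hIU : I ⊆ U := Finset.inter_subset_union
    set e := ∑ x ∈ U \ I, min (fmu r k x) (fmu s k x) with he
    have hsummin : ∑ x ∈ U, min (fmu r k x) (fmu s k x) = e + (I.card : ℝ) := by
      rw [← Finset.sum_sdiff hIU]
      congr 1
      rw [Finset.sum_congr rfl (fun x hx => ?_), Finset.sum_const, nsmul_eq_mul, mul_one]
      rcases Finset.mem_inter.1 hx with ⟨h1, h2⟩
      rw [fmu_of_mem h1, fmu_of_mem h2, min_self]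
    have he0 : 0 ≤ e := Finset.sum_nonneg fun x _ =>
      le_min (hfmur_pos x).le (hfmus_pos x).le
    have heα : e ≤ α * (U.card : ℝ) := by
      have h1 : e ≤ ((U \ I).card : ℝ) * α := by
        rw [he]
        have := Finset.sum_le_card_nsmul (U \ I)
          (fun x => min (fmu r k x) (fmu s k x)) α ?_
        · simpa [nsmul_eq_mul] using this
        · intro x hx
          rcases Finset.mem_sdiff.1 hx with ⟨hxU, hxI⟩
          have : x ∉ topk r k ∨ x ∉ topk s k := by
            by_contra hc
            push_neg at hc
            exact hxI (Finset.mem_inter.2 ⟨hc.1, hc.2⟩)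
          rcases this with h | h
          · exact (min_le_left _ _).trans (fmu_le_alpha hα0 hα1 π hk1 hkn h)
          · exact (min_le_right _ _).trans (fmu_le_alpha hα0 hα1 τ hk1 hkn h)
      have h2 : ((U \ I).card : ℝ) ≤ (U.card : ℝ) := by
        exact_mod_cast Finset.card_le_card (Finset.sdiff_subset)
      calc e ≤ ((U \ I).card : ℝ) * α := h1
        _ ≤ (U.card : ℝ) * α := by nlinarith
        _ = α * (U.card : ℝ) := mul_comm _ _
    have hdiff : fuji r s k - jac r s k = e / (U.card : ℝ) := by
      rw [fuji, jac, ← hU, ← hI, hsummax, hsummin, add_div]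
      ring
    rw [hdiff, abs_of_nonneg (div_nonneg he0 hUcard.le)]
    rw [div_le_iff₀ hUcard]
    calc e ≤ α * (U.card : ℝ) := heα
      _ ≤ ε * (U.card : ℝ) := by nlinarith
end

section
/- Transposition swap lemma for Jaccard: let s' be a ranking with rank_{s'}(x₁) = k₀ ≠ n where x₁ is the top item of r, let x_ℓ be the item with rank_{s'}(x_ℓ) = n, and let s be obtained from s' by swapping the ranks of x₁ and x_ℓ. Then for every k, J(r, s, k) ≤ J(r, s', k); moreover for k < k₀ the two Jaccard values are equal, while for k ≥ k₀ the union size does not decrease and the intersection size does not increase when passing from s' to s. -/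
open Finset Filter
open scoped Classical

lemma mem_topk_iff {n : ℕ} (s : Fin n → ℝ) (k : ℕ) (i : Fin n) :
    i ∈ topk s k ↔ rankOf s i ≤ k := by
  simp [topk]

lemma rankOf_le_n {n : ℕ} (s : Fin n → ℝ) (i : Fin n) : rankOf s i ≤ n := by
  have := Finset.card_filter_le (Finset.univ : Finset (Fin n)) (fun j => s i ≤ s j)
  simpa [rankOf] using this

theorem jaccard_swap_lemma {n : ℕ} (r s s' : Fin n → ℝ)
    (hr : Function.Injective r) (hs : Function.Injective s)
    (hs' : Function.Injective s')
    (hrid : ∀ i : Fin n, rankOf r i = i.val + 1)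
    (x₁ xℓ : Fin n) (hx₁ : rankOf r x₁ = 1)
    (k₀ : ℕ) (hk₀ : rankOf s' x₁ = k₀) (hk₀n : k₀ ≠ n)
    (hxℓ : rankOf s' xℓ = n)
    (hswap₁ : rankOf s x₁ = n) (hswapℓ : rankOf s xℓ = k₀)
    (hother : ∀ x : Fin n, x ≠ x₁ → x ≠ xℓ → rankOf s x = rankOf s' x) :
    ∀ k, 1 ≤ k → k ≤ n →
      jac r s k ≤ jac r s' k ∧
      (k < k₀ → jac r s k = jac r s' k) ∧
      (k₀ ≤ k →
        (topk r k ∪ topk s' k).card ≤ (topk r k ∪ topk s k).card ∧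
        (topk r k ∩ topk s k).card ≤ (topk r k ∩ topk s' k).card) := by
  intro k hk1 hkn
  have hk0n : k₀ ≤ n := hk₀ ▸ rankOf_le_n s' x₁
  have hk0lt : k₀ < n := lt_of_le_of_ne hk0n hk₀n
  have hx₁A : x₁ ∈ topk r k := by rw [mem_topk_iff, hx₁]; exact hk1
  -- helper to finish from set equality
  by_cases hcase : k < k₀
  · have hBB : topk s k = topk s' k := by
      ext i
      rw [mem_topk_iff, mem_topk_iff]
      by_cases h1 : i = x₁
      · subst h1; rw [hswap₁, hk₀]; omega
      by_cases h2 : i = xℓ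
      · subst h2; rw [hswapℓ, hxℓ]; omega
      · rw [hother i h1 h2]
    refine ⟨le_of_eq ?_, fun _ => ?_, fun h => ⟨?_, ?_⟩⟩
    · unfold jac; rw [hBB]
    · unfold jac; rw [hBB]
    · rw [hBB]
    · rw [hBB]
  · push_neg at hcase
    by_cases hkn' : k = n
    · subst hkn'
      have hBB : topk s k = topk s' k := by
        ext i
        rw [mem_topk_iff, mem_topk_iff]
        exact iff_of_true (rankOf_le_n s i) (rankOf_le_n s' i)
      refine ⟨le_of_eq ?_, fun h => absurd (lt_of_lt_of_le h hcase) (lt_irrefl _), fun _ => ⟨?_, ?_⟩⟩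
      · unfold jac; rw [hBB]
      · rw [hBB]
      · rw [hBB]
    · have hklt : k < n := lt_of_le_of_ne hkn hkn'
      have hx₁ne : x₁ ≠ xℓ := by
        intro h; rw [h] at hswap₁; rw [hswap₁] at hswapℓ; omega
      have hx₁B' : x₁ ∈ topk s' k := by rw [mem_topk_iff, hk₀]; exact hcase
      have hx₁B : x₁ ∉ topk s k := by rw [mem_topk_iff, hswap₁]; omega
      have hxℓB : xℓ ∈ topk s k := by rw [mem_topk_iff, hswapℓ]; exact hcase
      have hxℓB' : xℓ ∉ topk s' k := by rw [mem_topk_iff, hxℓ]; omega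
      have hUsub : topk r k ∪ topk s' k ⊆ topk r k ∪ topk s k := by
        intro i hi
        rcases Finset.mem_union.mp hi with hi | hi
        · exact Finset.mem_union_left _ hi
        · by_cases h1 : i = x₁
          · subst h1; exact Finset.mem_union_left _ hx₁A
          by_cases h2 : i = xℓ
          · subst h2; exact absurd hi hxℓB'
          · refine Finset.mem_union_right _ ?_
            rw [mem_topk_iff, hother i h1 h2]
            exact (mem_topk_iff s' k i).mp hi
      have hIsub : topk r k ∩ topk s k ⊆ insert xℓ ((topk r k ∩ topk s' k).erase x₁) := by
        intro i hi
        rcases Finset.mem_inter.mp hi with ⟨hiA, hiB⟩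
        by_cases h2 : i = xℓ
        · subst h2; exact Finset.mem_insert_self _ _
        · have h1 : i ≠ x₁ := by rintro rfl; exact hx₁B hiB
          refine Finset.mem_insert_of_mem (Finset.mem_erase.mpr ⟨h1, ?_⟩)
          refine Finset.mem_inter.mpr ⟨hiA, ?_⟩
          rw [mem_topk_iff, ← hother i h1 h2]
          exact (mem_topk_iff s k i).mp hiB
      have hx₁I : x₁ ∈ topk r k ∩ topk s' k := Finset.mem_inter.mpr ⟨hx₁A, hx₁B'⟩
      have hIcard : (topk r k ∩ topk s k).card ≤ (topk r k ∩ topk s' k).card := by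
        have h1 := Finset.card_le_card hIsub
        have h2 := Finset.card_insert_le xℓ ((topk r k ∩ topk s' k).erase x₁)
        have h3 := Finset.card_erase_of_mem hx₁I
        have h4 : 1 ≤ (topk r k ∩ topk s' k).card := Finset.card_pos.mpr ⟨x₁, hx₁I⟩
        omega
      have hUcard : (topk r k ∪ topk s' k).card ≤ (topk r k ∪ topk s k).card :=
        Finset.card_le_card hUsub
      refine ⟨?_, fun h => absurd (lt_of_lt_of_le h hcase) (lt_irrefl _), fun _ => ⟨hUcard, hIcard⟩⟩
      unfold jac
      have hUpos : 0 < ((topk r k ∪ topk s' k).card : ℝ) := by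
        have : 0 < (topk r k ∪ topk s' k).card :=
          Finset.card_pos.mpr ⟨x₁, Finset.mem_union_left _ hx₁A⟩
        exact_mod_cast this
      exact div_le_div₀ (by positivity) (by exact_mod_cast hIcard) hUpos
        (by exact_mod_cast hUcard)
end

section
/- For the three-part rankings on n items (n even): r orders items x₁,…,x_n; s orders items x_{n/2+1},…,x_n, x₁,…,x_{n/2}; t orders items x_n, x_{n−1},…,x₁ (the full reversal). Then for every cutoff k, J(r, s, k) = J(r, t, k). -/
open Finset Filter
open scoped Classical

lemma card_filter_val {n : ℕ} (p : ℕ → Prop) [DecidablePred p] :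
    (Finset.univ.filter (fun i : Fin n => p i.val)).card
      = ((Finset.range n).filter p).card := by
  rw [Finset.card_filter, Finset.card_filter,
    Fin.sum_univ_eq_sum_range (fun i => if p i then 1 else 0)]

theorem two_part_ranking_jaccard_eq {n : ℕ} (hn : Even n) (hpos : 0 < n)
    (r s t : Fin n → ℝ)
    (hr : Function.Injective r) (hs : Function.Injective s)
    (ht : Function.Injective t)
    (hrrank : ∀ i : Fin n, rankOf r i = i.val + 1)
    (hsrank : ∀ i : Fin n, rankOf s i =
      if n / 2 ≤ i.val then i.val - n / 2 + 1 else i.val + n / 2 + 1)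
    (htrank : ∀ i : Fin n, rankOf t i = n - i.val) :
    ∀ k, 1 ≤ k → k ≤ n → jac r s k = jac r t k := by
  intro k hk1 hkn
  obtain ⟨m, hm⟩ := hn
  have hm2 : n / 2 = m := by omega
  have hA : topk r k = Finset.univ.filter (fun i : Fin n => i.val + 1 ≤ k) := by
    simp [topk, hrrank]
  have hB : topk s k = Finset.univ.filter
      (fun i : Fin n => (if m ≤ i.val then i.val - m + 1 else i.val + m + 1) ≤ k) := by
    simp [topk, hsrank, hm2]
  have hC : topk t k = Finset.univ.filter (fun i : Fin n => n - i.val ≤ k) := by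
    simp [topk, htrank]
  -- cardinalities
  have cA : (topk r k).card = k := by
    rw [hA, card_filter_val (fun i => i + 1 ≤ k)]
    have : (Finset.range n).filter (fun i => i + 1 ≤ k) = Finset.range k := by
      ext i; simp; omega
    rw [this, Finset.card_range]
  have cB : (topk s k).card = k := by
    rw [hB, card_filter_val (fun i => (if m ≤ i then i - m + 1 else i + m + 1) ≤ k)]
    have : (Finset.range n).filter
        (fun i => (if m ≤ i then i - m + 1 else i + m + 1) ≤ k)
        = Finset.range (k - m) ∪ Finset.Ico m (min (k + m) n) := by
      ext i
      simp only [Finset.mem_filter, Finset.mem_range, Finset.mem_union, Finset.mem_Ico,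
        lt_min_iff]
      split_ifs <;> omega
    rw [this, Finset.card_union_of_disjoint, Finset.card_range, Nat.card_Ico]
    · omega
    · simp only [Finset.disjoint_left, Finset.mem_range, Finset.mem_Ico]
      intro a ha hb
      omega
  have cC : (topk t k).card = k := by
    rw [hC, card_filter_val (fun i => n - i ≤ k)]
    have : (Finset.range n).filter (fun i => n - i ≤ k) = Finset.Ico (n - k) n := by
      ext i; simp; omega
    rw [this, Nat.card_Ico]; omega
  have cAB : (topk r k ∩ topk s k).card = 2 * k - n := by
    have hset : topk r k ∩ topk s k = Finset.univ.filter
        (fun i : Fin n => i.val + 1 ≤ k ∧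
          (if m ≤ i.val then i.val - m + 1 else i.val + m + 1) ≤ k) := by
      rw [hA, hB]
      ext i; simp [Finset.mem_inter]
    rw [hset, card_filter_val (fun i => i + 1 ≤ k ∧ (if m ≤ i then i - m + 1 else i + m + 1) ≤ k)]
    have : (Finset.range n).filter
        (fun i => i + 1 ≤ k ∧ (if m ≤ i then i - m + 1 else i + m + 1) ≤ k)
        = Finset.range (k - m) ∪ Finset.Ico m k := by
      ext i
      simp only [Finset.mem_filter, Finset.mem_range, Finset.mem_union, Finset.mem_Ico]
      split_ifs <;> omega
    rw [this, Finset.card_union_of_disjoint, Finset.card_range, Nat.card_Ico]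
    · omega
    · simp only [Finset.disjoint_left, Finset.mem_range, Finset.mem_Ico]
      intro a ha hb
      omega
  have cAC : (topk r k ∩ topk t k).card = 2 * k - n := by
    have hset : topk r k ∩ topk t k = Finset.univ.filter
        (fun i : Fin n => i.val + 1 ≤ k ∧ n - i.val ≤ k) := by
      rw [hA, hC]
      ext i; simp [Finset.mem_inter]
    rw [hset, card_filter_val (fun i => i + 1 ≤ k ∧ n - i ≤ k)]
    have : (Finset.range n).filter (fun i => i + 1 ≤ k ∧ n - i ≤ k)
        = Finset.Ico (n - k) k := by
      ext i; simp; omega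
    rw [this, Nat.card_Ico]; omega
  have uAB : (topk r k ∪ topk s k).card = 2 * k - (2 * k - n) := by
    have h := Finset.card_union_add_card_inter (topk r k) (topk s k)
    omega
  have uAC : (topk r k ∪ topk t k).card = 2 * k - (2 * k - n) := by
    have h := Finset.card_union_add_card_inter (topk r k) (topk t k)
    omega
  unfold jac
  rw [cAB, cAC, uAB, uAC]
end
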